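/- Let 𝒜 be an A-valued function algebra on X and ℳ a maximal ideal of 𝒜 with ℳ(x₀) ≠ A for some x₀ ∈ X. Then for every x ∈ X with x ≠ x₀, one has ℳ(x) = A. -/

import Mathlib

variable {X : Type*} [TopologicalSpace X] [CompactSpace X] [T2Space X]
variable {A : Type*} [NormedCommRing A] [NormedAlgebra ℂ A] [CompleteSpace A] [Nontrivial A]

/-- Evaluation at a point, as a ring homomorphism on an `A`-valued function algebra
`𝒜 ⊆ C(X, A)`. -/
def evalHom (𝒜 : Subalgebra ℂ C(X, A)) (x : X) : ↥𝒜 →+* A where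
  toFun f := (f : C(X, A)) x
  map_one' := rfl
  map_mul' _ _ := rfl
  map_zero' := rfl
  map_add' _ _ := rfl

/-- If ℳ is a maximal ideal of 𝒜 with ℳ(x₀) ≠ A, then ℳ(x) = A for every x ≠ x₀. -/
theorem stmt2 (𝒜 : Subalgebra ℂ C(X, A))
    (hconst : ∀ a : A, ContinuousMap.const X a ∈ 𝒜)
    (hsep : ∀ x y : X, x ≠ y → ∀ M : Ideal A, M.IsMaximal → ∃ f ∈ 𝒜, f x - f y ∉ M)
    (ℳ : Ideal ↥𝒜) (hℳ : ℳ.IsMaximal) (x₀ : X)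
    (h : {a : A | ∃ f ∈ ℳ, (f : C(X, A)) x₀ = a} ≠ Set.univ) :
    ∀ x : X, x ≠ x₀ → {a : A | ∃ f ∈ ℳ, (f : C(X, A)) x = a} = Set.univ := by
  intro x hx
  have hsurj : ∀ y : X, Function.Surjective (evalHom 𝒜 y) := fun y a =>
    ⟨⟨ContinuousMap.const X a, hconst a⟩, rfl⟩
  have hset : ∀ y : X, {a : A | ∃ f ∈ ℳ, (f : C(X, A)) y = a}
      = ↑(ℳ.map (evalHom 𝒜 y)) := by
    intro y
    ext a
    rw [SetLike.mem_coe, Ideal.mem_map_iff_of_surjective _ (hsurj y)]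
    rfl
  rw [hset]
  by_contra hne
  have hxtop : ℳ.map (evalHom 𝒜 x) ≠ ⊤ := by
    intro htop; exact hne (by rw [htop]; rfl)
  obtain ⟨N, hN, hNle⟩ := Ideal.exists_le_maximal _ hxtop
  have h0top : ℳ.map (evalHom 𝒜 x₀) ≠ ⊤ := by
    intro htop; exact h (by rw [hset x₀, htop]; rfl)
  obtain ⟨M0, hM0, hM0le⟩ := Ideal.exists_le_maximal _ h0top
  have hcomap : ℳ = M0.comap (evalHom 𝒜 x₀) := by
    refine hℳ.eq_of_le ?_ ?_
    · exact Ideal.comap_ne_top _ hM0.ne_top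
    · intro f hf
      exact hM0le (Ideal.mem_map_of_mem _ hf)
  obtain ⟨f, hf𝒜, hfN⟩ := hsep x x₀ hx N hN
  set g : ↥𝒜 := ⟨f - ContinuousMap.const X (f x₀), sub_mem hf𝒜 (hconst _)⟩ with hg
  have hgℳ : g ∈ ℳ := by
    rw [hcomap]
    show (f - ContinuousMap.const X (f x₀)) x₀ ∈ M0
    simp
  have : (f x - f x₀) ∈ N := by
    have := hNle (Ideal.mem_map_of_mem (evalHom 𝒜 x) hgℳ)
    exact this
  exact hfN this
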